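/- Let n = 3, H = 2/3 and d ∈ ℝ. Then M_{H,d}(t) > 0 and P_{H,d}(t) > 0 for all sufficiently large t, and lim_{t→∞} 2√2 · √t · e^{−t} · Q_{H,d}(t) = 1. -/

import Mathlib

open Filter Topology

/-- `Ifun m t = ∫₀ᵗ sinh^m(r) dr`. -/
noncomputable def Ifun (m : ℕ) (t : ℝ) : ℝ := ∫ r in (0:ℝ)..t, Real.sinh r ^ m

/-- `Mfun n H d t = sinh^{n-1}(t) − nH·I_{n-1}(t) − d`. -/
noncomputable def Mfun (n : ℕ) (H d t : ℝ) : ℝ :=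
  Real.sinh t ^ (n - 1) - n * H * Ifun (n - 1) t - d

/-- `Pfun n H d t = sinh^{n-1}(t) + nH·I_{n-1}(t) + d`. -/
noncomputable def Pfun (n : ℕ) (H d t : ℝ) : ℝ :=
  Real.sinh t ^ (n - 1) + n * H * Ifun (n - 1) t + d

/-- `Qfun n H d t = (nH·I_{n-1}(t) + d)/√(M·P)`. -/
noncomputable def Qfun (n : ℕ) (H d t : ℝ) : ℝ :=
  (n * H * Ifun (n - 1) t + d) / Real.sqrt (Mfun n H d t * Pfun n H d t)

lemma Ifun_two (t : ℝ) : Ifun 2 t = (Real.sinh t * Real.cosh t - t) / 2 := by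
  have h : ∀ r ∈ Set.uIcc (0:ℝ) t,
      HasDerivAt (fun r => (Real.sinh r * Real.cosh r - r) / 2) (Real.sinh r ^ 2) r := by
    intro r _
    have h1 := ((Real.hasDerivAt_sinh r).mul (Real.hasDerivAt_cosh r)).sub (hasDerivAt_id r)
    have h2 := h1.div_const 2
    have hc := Real.cosh_sq r
    have key : Real.sinh r ^ 2
        = (Real.cosh r * Real.cosh r + Real.sinh r * Real.sinh r - 1) / 2 := by
      nlinarith [hc]
    rw [key]
    exact h2
  have hint : IntervalIntegrable (fun r => Real.sinh r ^ 2) MeasureTheory.volume 0 t :=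
    (Real.continuous_sinh.pow 2).intervalIntegrable 0 t
  have := intervalIntegral.integral_eq_sub_of_hasDerivAt h hint
  simp [Ifun, this]

lemma Num_eq (d t : ℝ) :
    2 * Ifun 2 t + d = (Real.exp t ^ 2 - Real.exp (-t) ^ 2) / 4 - t + d := by
  rw [Ifun_two, Real.sinh_eq, Real.cosh_eq, Real.exp_neg]
  field_simp
  ring

lemma Mfun_eq (d t : ℝ) :
    Mfun 3 (2/3) d t = t - d - (1 - Real.exp (-t) ^ 2) / 2 := by
  show Real.sinh t ^ 2 - (3:ℕ) * (2/3) * Ifun 2 t - d = _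
  rw [Ifun_two, Real.sinh_eq, Real.cosh_eq, Real.exp_neg]
  push_cast
  field_simp
  ring

lemma Pfun_eq (d t : ℝ) :
    Pfun 3 (2/3) d t = (Real.exp t ^ 2 - 1) / 2 - t + d := by
  show Real.sinh t ^ 2 + (3:ℕ) * (2/3) * Ifun 2 t + d = _
  rw [Ifun_two, Real.sinh_eq, Real.cosh_eq, Real.exp_neg]
  push_cast
  field_simp
  ring

lemma Qfun_eq (d t : ℝ) :
    Qfun 3 (2/3) d t =
      (2 * Ifun 2 t + d) / Real.sqrt (Mfun 3 (2/3) d t * Pfun 3 (2/3) d t) := by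
  show ((3:ℕ) * (2/3) * Ifun 2 t + d) / _ = _
  norm_num

/-- Let `n = 3`, `H = 2/3` and `d ∈ ℝ`. Then `M_{H,d}(t) > 0` and `P_{H,d}(t) > 0` for all
sufficiently large `t`, and `lim_{t→∞} 2√2·√t·e^{−t}·Q_{H,d}(t) = 1`. -/
theorem stmt10 (d : ℝ) :
    (∃ t₀ : ℝ, ∀ t, t₀ ≤ t → 0 < Mfun 3 (2 / 3) d t ∧ 0 < Pfun 3 (2 / 3) d t) ∧
    Tendsto (fun t : ℝ => 2 * Real.sqrt 2 * Real.sqrt t * Real.exp (-t) * Qfun 3 (2 / 3) d t)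
      atTop (𝓝 1) := by
  have hpos : ∀ t : ℝ, |d| + 2 ≤ t → 0 < Mfun 3 (2/3) d t ∧ 0 < Pfun 3 (2/3) d t := by
    intro t ht
    have hd1 : d ≤ |d| := le_abs_self d
    have hd2 : -|d| ≤ d := neg_abs_le d
    have hd0 : 0 ≤ |d| := abs_nonneg d
    constructor
    · rw [Mfun_eq]
      nlinarith [sq_nonneg (Real.exp (-t)), Real.exp_pos (-t)]
    · rw [Pfun_eq]
      have ht0 : 0 ≤ t := by linarith
      have h1 : 1 + t ≤ Real.exp t := by
        have := Real.add_one_le_exp t; linarith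
      have h2 : (1 + t) ^ 2 ≤ Real.exp t ^ 2 := by nlinarith
      nlinarith
  refine ⟨⟨|d| + 2, hpos⟩, ?_⟩
  -- basic limits
  have l1 : Tendsto (fun t : ℝ => Real.exp (-t)) atTop (𝓝 0) :=
    Real.tendsto_exp_neg_atTop_nhds_zero
  have l2 : Tendsto (fun t : ℝ => t * Real.exp (-t)) atTop (𝓝 0) := by
    simpa using Real.tendsto_pow_mul_exp_neg_atTop_nhds_zero 1
  have l1p2 : Tendsto (fun t : ℝ => Real.exp (-t) ^ 2) atTop (𝓝 0) := by
    simpa using l1.pow 2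
  have l1p4 : Tendsto (fun t : ℝ => Real.exp (-t) ^ 4) atTop (𝓝 0) := by
    simpa using l1.pow 4
  -- numerator limit
  have hNum : Tendsto (fun t : ℝ => (2 * Ifun 2 t + d) * Real.exp (-t) ^ 2)
      atTop (𝓝 (1/4)) := by
    have h : Tendsto (fun t : ℝ =>
        (1 - Real.exp (-t) ^ 4) / 4 + d * Real.exp (-t) ^ 2
          - t * Real.exp (-t) * Real.exp (-t)) atTop (𝓝 (1/4)) := by
      have c1 : Tendsto (fun _ : ℝ => (1:ℝ)) atTop (𝓝 1) := tendsto_const_nhds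
      have := (((c1.sub l1p4).div_const 4).add
        (l1p2.const_mul d)).sub (l2.mul l1)
      simpa using this
    refine h.congr fun t => ?_
    rw [Num_eq, Real.exp_neg]
    field_simp
    ring
  -- M limit
  have hMd : Tendsto (fun t : ℝ => Mfun 3 (2/3) d t / t) atTop (𝓝 1) := by
    have h0 : Tendsto (fun t : ℝ => (d + (1 - Real.exp (-t) ^ 2) / 2) / t)
        atTop (𝓝 0) :=
      Tendsto.div_atTop (tendsto_const_nhds.add
        ((tendsto_const_nhds.sub l1p2).div_const 2)) tendsto_id
    have h1 : Tendsto (fun t : ℝ => 1 - (d + (1 - Real.exp (-t) ^ 2) / 2) / t)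
        atTop (𝓝 1) := by simpa using tendsto_const_nhds.sub h0
    refine h1.congr' ?_
    filter_upwards [eventually_gt_atTop (0:ℝ)] with t ht
    rw [Mfun_eq]
    field_simp
    ring
  have hMlim : Tendsto (fun t : ℝ => t / Mfun 3 (2/3) d t) atTop (𝓝 1) := by
    have := hMd.inv₀ one_ne_zero
    simpa [inv_div] using this
  -- P limit
  have hPd : Tendsto (fun t : ℝ => Pfun 3 (2/3) d t * Real.exp (-t) ^ 2)
      atTop (𝓝 (1/2)) := by
    have h : Tendsto (fun t : ℝ =>
        (1 - Real.exp (-t) ^ 2) / 2 + d * Real.exp (-t) ^ 2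
          - t * Real.exp (-t) * Real.exp (-t)) atTop (𝓝 (1/2)) := by
      have c1 : Tendsto (fun _ : ℝ => (1:ℝ)) atTop (𝓝 1) := tendsto_const_nhds
      have := (((c1.sub l1p2).div_const 2).add
        (l1p2.const_mul d)).sub (l2.mul l1)
      simpa using this
    refine h.congr fun t => ?_
    rw [Pfun_eq, Real.exp_neg]
    field_simp
    ring
  have hPlim : Tendsto (fun t : ℝ => Real.exp t ^ 2 / Pfun 3 (2/3) d t)
      atTop (𝓝 2) := by
    have := hPd.inv₀ (by norm_num : (1/2 : ℝ) ≠ 0)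
    have heq : ∀ t : ℝ, (Pfun 3 (2/3) d t * Real.exp (-t) ^ 2)⁻¹
        = Real.exp t ^ 2 / Pfun 3 (2/3) d t := by
      intro t
      rw [Real.exp_neg, inv_pow, mul_inv, inv_inv, mul_comm, ← div_eq_mul_inv]
    rw [show ((1/2 : ℝ))⁻¹ = 2 by norm_num] at this
    exact (this.congr heq)
  -- assemble
  have hg : Tendsto (fun t : ℝ =>
      2 * Real.sqrt 2 * ((2 * Ifun 2 t + d) * Real.exp (-t) ^ 2)
        * Real.sqrt (t / Mfun 3 (2/3) d t)
        * Real.sqrt (Real.exp t ^ 2 / Pfun 3 (2/3) d t)) atTop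
      (𝓝 (2 * Real.sqrt 2 * (1/4) * Real.sqrt 1 * Real.sqrt 2)) :=
    ((tendsto_const_nhds.mul hNum).mul hMlim.sqrt).mul hPlim.sqrt
  have hval : 2 * Real.sqrt 2 * (1/4) * Real.sqrt 1 * Real.sqrt 2 = 1 := by
    rw [Real.sqrt_one]
    have := Real.mul_self_sqrt (show (0:ℝ) ≤ 2 by norm_num)
    nlinarith [this]
  rw [hval] at hg
  refine hg.congr' ?_
  filter_upwards [eventually_ge_atTop (|d| + 2), eventually_gt_atTop (0:ℝ)]
    with t ht ht0
  obtain ⟨hM, hP⟩ := hpos t ht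
  rw [Qfun_eq, Real.sqrt_mul hM.le, Real.sqrt_div ht0.le, Real.sqrt_div (by positivity),
    Real.sqrt_sq (Real.exp_pos t).le, Real.exp_neg]
  have hsM : Real.sqrt (Mfun 3 (2/3) d t) ≠ 0 := by positivity
  have hsP : Real.sqrt (Pfun 3 (2/3) d t) ≠ 0 := by positivity
  field_simp
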